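/- arXiv:1901.08468 — 7 statements merged into one kernel-verified Lean document; each statement's English description precedes it below -/
import Mathlib

section
/- For all n ≥ 1, n·hₙ = Σ_{k=1}^{n} p_k h_{n-k}, where hₖ is the k-th complete homogeneous symmetric polynomial and p_k the k-th power sum in variables x₁,…,x_m. -/
open MvPolynomial Finset

lemma ng_slice {R : Type*} [CommRing R] {m : ℕ} (x : Fin m → R) (i : Fin m)
    {n k : ℕ} (hk : k ≤ n) :
    ∑ t : Sym (Fin m) (n - k), ((Multiset.replicate k i + t.1).map x).prod
      = ∑ s ∈ univ.filter (fun s : Sym (Fin m) n => k ≤ s.1.count i),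
          (s.1.map x).prod := by
  refine Finset.sum_bij'
    (fun t _ => (⟨Multiset.replicate k i + t.1, by
      simp [t.2, Nat.add_sub_cancel' hk]⟩ : Sym (Fin m) n))
    (fun s hs => (⟨s.1 - Multiset.replicate k i, by
      rw [Multiset.card_sub (Multiset.le_count_iff_replicate_le.1 (Finset.mem_filter.1 hs).2)]
      simp [s.2]⟩ : Sym (Fin m) (n - k)))
    ?_ ?_ ?_ ?_ ?_
  · intro t _
    exact Finset.mem_filter.2 ⟨Finset.mem_univ _, by show k ≤ Multiset.count i (Multiset.replicate k i + t.1); rw [Multiset.count_add, Multiset.count_replicate_self]; omega⟩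
  · intro s hs
    exact Finset.mem_univ _
  · intro t _
    apply Subtype.ext
    simp
  · intro s hs
    apply Subtype.ext
    have h := Multiset.le_count_iff_replicate_le.1 (Finset.mem_filter.1 hs).2
    simpa [add_comm] using tsub_add_cancel_of_le h
  · intro t _
    rfl

/-- Newton–Girard identity for complete homogeneous symmetric polynomials:
for all `n ≥ 1`, `n·hₙ = Σ_{k=1}^{n} p_k h_{n-k}` in variables `x 0, …, x (m-1)`. -/
theorem newton_girard_hsymm {R : Type*} [CommRing R] (m : ℕ) (x : Fin m → R)
    (n : ℕ) (hn : 1 ≤ n) :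
    (n : R) * eval x (hsymm (Fin m) R n) =
      ∑ k ∈ Icc 1 n, eval x (psum (Fin m) R k) * eval x (hsymm (Fin m) R (n - k)) := by
  have heval : ∀ N : ℕ, eval x (hsymm (Fin m) R N) = ∑ s : Sym (Fin m) N, (s.1.map x).prod := by
    intro N
    simp [hsymm, map_multiset_prod, Multiset.map_map, Function.comp]
  have hpsum : ∀ k : ℕ, eval x (psum (Fin m) R k) = ∑ i, x i ^ k := by
    intro k; simp [psum]
  symm
  calc ∑ k ∈ Icc 1 n, eval x (psum (Fin m) R k) * eval x (hsymm (Fin m) R (n - k))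
      = ∑ k ∈ Icc 1 n, ∑ i, ∑ t : Sym (Fin m) (n - k),
          ((Multiset.replicate k i + t.1).map x).prod := by
        refine Finset.sum_congr rfl fun k hk => ?_
        rw [heval, hpsum, Finset.sum_mul]
        refine Finset.sum_congr rfl fun i _ => ?_
        rw [Finset.mul_sum]
        refine Finset.sum_congr rfl fun t _ => ?_
        simp [Multiset.prod_replicate]
    _ = ∑ k ∈ Icc 1 n, ∑ i, ∑ s ∈ univ.filter (fun s : Sym (Fin m) n => k ≤ s.1.count i),
          (s.1.map x).prod := by
        refine Finset.sum_congr rfl fun k hk => Finset.sum_congr rfl fun i _ => ?_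
        exact ng_slice x i (Finset.mem_Icc.1 hk).2
    _ = ∑ i, ∑ s : Sym (Fin m) n, (s.1.count i : R) * (s.1.map x).prod := by
        rw [Finset.sum_comm]
        refine Finset.sum_congr rfl fun i _ => ?_
        simp_rw [Finset.sum_filter]
        rw [Finset.sum_comm]
        refine Finset.sum_congr rfl fun s _ => ?_
        rw [← Finset.sum_filter]
        have hc : s.1.count i ≤ n := by simpa [s.2] using Multiset.count_le_card i s.1
        have he : (Icc 1 n).filter (fun k => k ≤ s.1.count i) = Icc 1 (s.1.count i) := by
          ext k; simp only [Finset.mem_Icc, Finset.mem_filter]; omega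
        rw [he, Finset.sum_const, Nat.card_Icc]
        simp [nsmul_eq_mul]
    _ = (n : R) * eval x (hsymm (Fin m) R n) := by
        rw [Finset.sum_comm, heval, Finset.mul_sum]
        refine Finset.sum_congr rfl fun s _ => ?_
        rw [← Finset.sum_mul]
        congr 1
        rw [← Nat.cast_sum]
        norm_cast
        rw [Multiset.sum_count_eq_card (fun a _ => Finset.mem_univ a), s.2]
end

section
/- For all n ≥ 1, pₙ = Σ_{k=0}^{n} (-1)^{n-k} k hₖ e_{n-k}, where eₖ, hₖ, pₖ are the elementary, complete homogeneous, and power sum symmetric polynomials in x₁,…,x_m. -/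
open Finset PowerSeries

section aux
variable {R : Type*} [CommRing R] {m : ℕ}

private noncomputable def geo (a : R) : R⟦X⟧ := PowerSeries.mk fun n => a ^ n

private lemma one_sub_mul_geo (a : R) : (1 - PowerSeries.C a * PowerSeries.X) * geo a = 1 := by
  ext n
  cases n with
  | zero => simp [geo, coeff_mul]
  | succ k =>
    simp only [sub_mul, one_mul, map_sub, mul_assoc, PowerSeries.coeff_C_mul,
      coeff_succ_X_mul, geo, PowerSeries.coeff_mk, PowerSeries.coeff_one, Nat.succ_ne_zero,
      if_false, ← pow_succ']
    ring

private lemma X_mul_deriv_geo (a : R) :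
    PowerSeries.X * (d⁄dX R) (geo a) = (PowerSeries.C a * PowerSeries.X) * geo a * geo a := by
  ext n
  cases n with
  | zero => simp [PowerSeries.coeff_mul]
  | succ k =>
    rw [coeff_succ_X_mul, PowerSeries.coeff_derivative]
    have : (PowerSeries.C a * PowerSeries.X) * geo a * geo a
        = PowerSeries.C a * (PowerSeries.X * (geo a * geo a)) := by ring
    rw [this, PowerSeries.coeff_C_mul, coeff_succ_X_mul, PowerSeries.coeff_mul]
    have h1 : ∀ p ∈ Finset.HasAntidiagonal.antidiagonal k,
        PowerSeries.coeff p.1 (geo a) * PowerSeries.coeff p.2 (geo a) = a ^ k := by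
      rintro ⟨i, j⟩ hp
      simp only [Finset.HasAntidiagonal.mem_antidiagonal] at hp
      simp [geo, ← pow_add, hp]
    rw [Finset.sum_congr rfl h1, Finset.sum_const, Finset.Nat.card_antidiagonal]
    simp [geo, pow_succ]
    ring

private lemma X_mul_deriv_prod (x : Fin m → R) (s : Finset (Fin m)) :
    PowerSeries.X * (d⁄dX R) (∏ i ∈ s, geo (x i)) =
      (∏ i ∈ s, geo (x i)) * ∑ i ∈ s, PowerSeries.C (x i) * PowerSeries.X * geo (x i) := by
  induction s using Finset.induction with
  | empty => simp
  | @insert a s ha ih =>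
    rw [Finset.prod_insert ha, Finset.sum_insert ha, Derivation.leibniz]
    simp only [smul_eq_mul]
    calc PowerSeries.X * (geo (x a) * (d⁄dX R) (∏ i ∈ s, geo (x i)) +
            (∏ i ∈ s, geo (x i)) * (d⁄dX R) (geo (x a)))
        = geo (x a) * (PowerSeries.X * (d⁄dX R) (∏ i ∈ s, geo (x i))) +
            (∏ i ∈ s, geo (x i)) * (PowerSeries.X * (d⁄dX R) (geo (x a))) := by ring
      _ = _ := by rw [ih, X_mul_deriv_geo]; ring

end aux

section aux2
variable {R : Type*} [CommRing R] {m : ℕ}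

private lemma coeff_geo_prod (x : Fin m → R) (n : ℕ) :
    PowerSeries.coeff n (∏ i, geo (x i)) =
      MvPolynomial.eval x (MvPolynomial.hsymm (Fin m) R n) := by
  rw [PowerSeries.coeff_prod]
  simp only [geo, PowerSeries.coeff_mk]
  rw [MvPolynomial.hsymm, map_sum]
  refine Finset.sum_bij'
    (fun (l : Fin m →₀ ℕ) (hl : l ∈ Finset.finsuppAntidiag Finset.univ n) => (⟨l.toMultiset, by
      rw [Finset.mem_finsuppAntidiag'] at hl
      rw [Finsupp.card_toMultiset, ← hl.1]; rfl⟩ : Sym (Fin m) n))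
    (fun s _ => Multiset.toFinsupp s.1) (fun l hl => Finset.mem_univ _) ?_ ?_ ?_ ?_
  · intro s hs
    rw [Finset.mem_finsuppAntidiag']
    refine ⟨?_, Finset.subset_univ _⟩
    exact (Multiset.toFinsupp_sum_eq _).trans s.2
  · intro l hl
    exact Finsupp.toMultiset_toFinsupp l
  · intro s hs
    exact Sym.ext (by simp [Multiset.toFinsupp_toMultiset])
  · intro l hl
    have h1 : MvPolynomial.eval x ((l.toMultiset.map MvPolynomial.X).prod)
        = (l.toMultiset.map x).prod := by
      rw [map_multiset_prod, Multiset.map_map]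
      simp [Function.comp_def]
    rw [h1, Finset.prod_multiset_map_count]
    rw [Finset.prod_subset (Finset.subset_univ l.toMultiset.toFinset)]
    · exact Finset.prod_congr rfl fun i _ => by rw [Finsupp.count_toMultiset]
    · intro i _ hi
      rw [Finsupp.count_toMultiset, Finsupp.notMem_support_iff.mp (by simpa using hi), pow_zero]

private lemma coeff_one_sub_prod (x : Fin m → R) (n : ℕ) :
    PowerSeries.coeff n (∏ i, (1 - PowerSeries.C (x i) * PowerSeries.X)) =
      (-1 : R) ^ n * MvPolynomial.eval x (MvPolynomial.esymm (Fin m) R n) := by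
  have h0 : ∀ i : Fin m, (1 : R⟦X⟧) - PowerSeries.C (x i) * PowerSeries.X
      = PowerSeries.C (-x i) * PowerSeries.X + 1 := by
    intro i; rw [map_neg, neg_mul, sub_eq_neg_add]
  simp_rw [h0]
  rw [Finset.prod_add]
  simp only [Finset.prod_const_one, mul_one, Finset.prod_mul_distrib, Finset.prod_const,
    ← map_prod, map_sum]
  have h1 : ∀ t : Finset (Fin m),
      PowerSeries.coeff n (PowerSeries.C (∏ i ∈ t, -x i) * PowerSeries.X ^ t.card)
        = if t.card = n then ∏ i ∈ t, -x i else 0 := by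
    intro t
    rw [PowerSeries.coeff_C_mul, PowerSeries.coeff_X_pow]
    simp only [eq_comm (a := n)]
    split_ifs <;> simp
  rw [Finset.sum_congr rfl fun t _ => h1 t, ← Finset.sum_filter]
  rw [MvPolynomial.esymm, map_sum]
  rw [show Finset.filter (fun t : Finset (Fin m) => t.card = n) Finset.univ.powerset
      = Finset.powersetCard n Finset.univ from (Finset.powersetCard_eq_filter ..).symm]
  rw [Finset.mul_sum]
  refine Finset.sum_congr rfl fun t ht => ?_
  rw [Finset.mem_powersetCard_univ] at ht
  have h2 : ∏ i ∈ t, -x i = (-1 : R) ^ t.card * ∏ i ∈ t, x i := by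
    rw [show (fun i => -x i) = fun i => (-1 : R) * x i from funext fun i => (neg_one_mul _).symm,
      Finset.prod_mul_distrib, Finset.prod_const]
  rw [h2, ht]
  simp [MvPolynomial.eval_prod]

private lemma coeff_X_mul_deriv (f : R⟦X⟧) (k : ℕ) :
    PowerSeries.coeff k (PowerSeries.X * (d⁄dX R) f) = (k : R) * PowerSeries.coeff k f := by
  cases k with
  | zero => simp [PowerSeries.coeff_zero_eq_constantCoeff]
  | succ j => rw [PowerSeries.coeff_succ_X_mul, PowerSeries.coeff_derivative]; push_cast; ring

end aux2

open MvPolynomial Finset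

/-- Newton-type convolution: for `n ≥ 1`,
`pₙ = Σ_{k=0}^{n} (-1)^(n-k) k hₖ e_{n-k}`. -/
theorem psum_eq_convolution_hsymm_esymm {R : Type*} [CommRing R] (m : ℕ) (x : Fin m → R)
    (n : ℕ) (hn : 1 ≤ n) :
    eval x (psum (Fin m) R n) =
      ∑ k ∈ range (n + 1), (-1 : R) ^ (n - k) * (k : R) * eval x (hsymm (Fin m) R k) *
        eval x (esymm (Fin m) R (n - k)) := by
  classical
  set H : R⟦X⟧ := ∏ i, geo (x i) with hH
  set F : R⟦X⟧ := ∏ i, (1 - PowerSeries.C (x i) * PowerSeries.X) with hF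
  have hFH : F * H = 1 := by
    rw [hF, hH, ← Finset.prod_mul_distrib]
    exact Finset.prod_eq_one fun i _ => one_sub_mul_geo (x i)
  have hkey : (PowerSeries.X * (d⁄dX R) H) * F
      = ∑ i, PowerSeries.C (x i) * PowerSeries.X * geo (x i) := by
    rw [hH, X_mul_deriv_prod x Finset.univ, ← hH]
    calc H * (∑ i, PowerSeries.C (x i) * PowerSeries.X * geo (x i)) * F
        = (F * H) * ∑ i, PowerSeries.C (x i) * PowerSeries.X * geo (x i) := by ring
      _ = _ := by rw [hFH, one_mul]
  have hcoeff := congrArg (PowerSeries.coeff n) hkey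
  obtain ⟨k0, rfl⟩ := Nat.exists_eq_succ_of_ne_zero (Nat.one_le_iff_ne_zero.mp hn)
  rw [PowerSeries.coeff_mul, map_sum] at hcoeff
  have hrhs : ∀ i : Fin m,
      PowerSeries.coeff (k0 + 1) (PowerSeries.C (x i) * PowerSeries.X * geo (x i))
        = x i ^ (k0 + 1) := by
    intro i
    rw [mul_assoc, PowerSeries.coeff_C_mul, PowerSeries.coeff_succ_X_mul]
    simp [geo, pow_succ']
  rw [Finset.sum_congr rfl fun i _ => hrhs i] at hcoeff
  have hlhs : ∀ p ∈ Finset.HasAntidiagonal.antidiagonal (k0 + 1),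
      PowerSeries.coeff p.1 (PowerSeries.X * (d⁄dX R) H) * PowerSeries.coeff p.2 F
        = (p.1 : R) * eval x (hsymm (Fin m) R p.1) *
            ((-1 : R) ^ p.2 * eval x (esymm (Fin m) R p.2)) := by
    rintro ⟨a, b⟩ _
    rw [coeff_X_mul_deriv, hH, coeff_geo_prod, hF, coeff_one_sub_prod]
  rw [Finset.sum_congr rfl hlhs, Finset.Nat.sum_antidiagonal_eq_sum_range_succ_mk] at hcoeff
  rw [show eval x (psum (Fin m) R (k0 + 1)) = ∑ i, x i ^ (k0 + 1) by simp [psum]]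
  rw [← hcoeff]
  exact Finset.sum_congr rfl fun k _ => by ring
end

section
/- For finite variable sets x₁,…,x_m and y₁,…,y_l in a commutative ring and each k ≥ 0, the coefficient of t^k in ∏_{i,j}(1 - x_i y_j t)^{-1} equals Σ_{λ ⊢ k} h_λ(x) m_λ(y). -/
open MvPolynomial Finset

open PowerSeries

lemma invOfUnit_one_sub_CX {R : Type*} [CommRing R] (a : R) :
    PowerSeries.invOfUnit (1 - PowerSeries.C (R := R) a * PowerSeries.X) 1
      = PowerSeries.mk (fun n => a ^ n) := by
  have hu : PowerSeries.constantCoeff (R := R) (1 - PowerSeries.C (R := R) a * PowerSeries.X) = (1 : Rˣ) := by simp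
  have h1 : (1 - PowerSeries.C (R := R) a * PowerSeries.X)
      * PowerSeries.invOfUnit (1 - PowerSeries.C (R := R) a * PowerSeries.X) 1 = 1 :=
    PowerSeries.mul_invOfUnit _ _ hu
  have h2 : (1 - PowerSeries.C (R := R) a * PowerSeries.X) * PowerSeries.mk (fun n => a ^ n) = 1 := by
    ext n
    cases n with
    | zero => simp
    | succ n =>
      rw [sub_mul, one_mul, map_sub, mul_assoc, PowerSeries.coeff_C_mul,
        PowerSeries.coeff_succ_X_mul]
      simp [pow_succ, mul_comm]
  exact (left_inv_eq_right_inv (by rw [mul_comm]; exact h2) h1).symm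

lemma sum_univ_count_eq {σ : Type*} [Fintype σ] [DecidableEq σ] (s : Multiset σ) :
    ∑ i : σ, s.count i = Multiset.card s := by
  rw [← Multiset.toFinset_sum_count_eq]
  exact (Finset.sum_subset (subset_univ _) (fun x _ hx => by
    simpa [Multiset.count_eq_zero] using hx)).symm

lemma sum_sym_eq_sum_finsuppAntidiag {σ M : Type*} [Fintype σ] [DecidableEq σ]
    [AddCommMonoid M] (n : ℕ) (F : Multiset σ → M) :
    ∑ s : Sym σ n, F s.1 = ∑ c ∈ finsuppAntidiag (univ : Finset σ) n, F c.toMultiset := by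
  refine Finset.sum_bij' (i := fun s _ => Multiset.toFinsupp s.1)
    (j := fun c hc => ⟨Finsupp.toMultiset c, ?_⟩) ?_ ?_ ?_ ?_ ?_
  · rw [Finsupp.card_toMultiset]
    rw [mem_finsuppAntidiag] at hc
    rw [Finsupp.sum, ← hc.1]
    exact Finset.sum_subset hc.2 (fun x _ hx => Finsupp.notMem_support_iff.mp hx)
  · intro s _
    simp only [mem_finsuppAntidiag]
    refine ⟨?_, subset_univ _⟩
    show ∑ i : σ, Multiset.count i s.1 = n
    rw [sum_univ_count_eq, s.2]
  · intro c _; exact mem_univ _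
  · intro s _; ext : 1; simp
  · intro c _; simp
  · intro s _; congr 1; simp

lemma prod_map_eq_prod_univ_pow {σ M : Type*} [Fintype σ] [DecidableEq σ] [CommMonoid M]
    (s : Multiset σ) (f : σ → M) :
    (s.map f).prod = ∏ i : σ, f i ^ s.count i := by
  rw [Finset.prod_multiset_map_count]
  exact Finset.prod_subset (subset_univ _) (fun x _ hx => by
    simp [Multiset.count_eq_zero.mpr (by simpa using hx)])

lemma eval_multiset_X_prod {σ R : Type*} [Fintype σ] [DecidableEq σ] [CommSemiring R]
    (x : σ → R) (s : Multiset σ) :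
    eval x ((s.map (X : σ → MvPolynomial σ R)).prod) = ∏ i : σ, x i ^ s.count i := by
  rw [map_multiset_prod, Multiset.map_map]
  simpa using prod_map_eq_prod_univ_pow s x


-- hsymmPart of ofSym as product over all variables-indices
lemma hsymmPart_ofSym {σ τ R : Type*} [Fintype σ] [DecidableEq σ] [Fintype τ] [DecidableEq τ]
    [CommSemiring R] {n : ℕ} (s : Sym σ n) :
    hsymmPart τ R (Nat.Partition.ofSym s) = ∏ j : σ, hsymm τ R (s.1.count j) := by
  rw [hsymmPart]
  show ((s.1.dedup.map s.1.count).map (hsymm τ R)).prod = _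
  rw [Multiset.map_map]
  have : (s.1.dedup.map (hsymm τ R ∘ s.1.count)).prod
      = ∏ j ∈ s.1.toFinset, hsymm τ R (s.1.count j) := rfl
  rw [this]
  exact Finset.prod_subset (subset_univ _) (fun x _ hx => by
    rw [Multiset.count_eq_zero.mpr (by simpa using hx), hsymm_zero])

lemma eval_hsymm_eq {σ R : Type*} [Fintype σ] [DecidableEq σ] [CommSemiring R]
    (x : σ → R) (n : ℕ) :
    eval x (hsymm σ R n) = ∑ c ∈ finsuppAntidiag (univ : Finset σ) n, ∏ i : σ, x i ^ c i := by
  rw [hsymm, map_sum,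
    sum_sym_eq_sum_finsuppAntidiag n (fun ms => eval x ((ms.map (MvPolynomial.X : σ → MvPolynomial σ R)).prod))]
  refine Finset.sum_congr rfl (fun c _ => ?_)
  rw [eval_multiset_X_prod]
  simp [Finsupp.count_toMultiset]

lemma prod_mk_geom {σ R : Type*} [Fintype σ] [DecidableEq σ] [CommRing R]
    (x : σ → R) (b : R) :
    ∏ i : σ, PowerSeries.mk (fun n => (x i * b) ^ n)
      = PowerSeries.mk (fun n => eval x (hsymm σ R n) * b ^ n) := by
  ext d
  rw [PowerSeries.coeff_prod, PowerSeries.coeff_mk, eval_hsymm_eq, Finset.sum_mul]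
  refine Finset.sum_congr rfl (fun c hc => ?_)
  rw [mem_finsuppAntidiag] at hc
  simp only [PowerSeries.coeff_mk, mul_pow]
  rw [Finset.prod_mul_distrib, Finset.prod_pow_eq_pow_sum, hc.1]

/-- Cauchy product expansion: the coefficient of `t^k` in `∏_{i,j}(1 - x_i y_j t)⁻¹`
equals `Σ_{λ ⊢ k} h_λ(x) m_λ(y)`. -/
theorem cauchy_product_hsymm {R : Type*} [CommRing R] (m l : ℕ)
    (x : Fin m → R) (y : Fin l → R) (k : ℕ) :
    PowerSeries.coeff (R := R) k
      (∏ i : Fin m, ∏ j : Fin l,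
        PowerSeries.invOfUnit (1 - PowerSeries.C (R := R) (x i * y j) * PowerSeries.X) 1) =
      ∑ μ : Nat.Partition k, eval x (hsymmPart (Fin m) R μ) * eval y (msymm (Fin l) R μ) := by
  -- RHS
  have hrhs : (∑ μ : Nat.Partition k, eval x (hsymmPart (Fin m) R μ) * eval y (msymm (Fin l) R μ))
      = ∑ c ∈ finsuppAntidiag (univ : Finset (Fin l)) k,
          (∏ j : Fin l, eval x (hsymm (Fin m) R (c j))) * ∏ j : Fin l, y j ^ c j := by
    have step1 : ∀ μ : Nat.Partition k,
        eval x (hsymmPart (Fin m) R μ) * eval y (msymm (Fin l) R μ)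
          = ∑ s : {a : Sym (Fin l) k // Nat.Partition.ofSym a = μ},
              (∏ j : Fin l, eval x (hsymm (Fin m) R (s.1.1.count j))) *
                ∏ j : Fin l, y j ^ s.1.1.count j := by
      intro μ
      rw [msymm, map_sum, Finset.mul_sum]
      refine Finset.sum_congr rfl (fun s _ => ?_)
      obtain ⟨s, rfl⟩ := s
      rw [hsymmPart_ofSym, map_prod]
      congr 1
      exact eval_multiset_X_prod y s.1
    simp_rw [step1]
    rw [Fintype.sum_fiberwise (fun s : Sym (Fin l) k => Nat.Partition.ofSym s)
      (fun s : Sym (Fin l) k => (∏ j : Fin l, eval x (hsymm (Fin m) R (s.1.count j))) *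
        ∏ j : Fin l, y j ^ s.1.count j)]
    rw [sum_sym_eq_sum_finsuppAntidiag k
      (fun ms => (∏ j : Fin l, eval x (hsymm (Fin m) R (ms.count j))) *
        ∏ j : Fin l, y j ^ ms.count j)]
    simp [Finsupp.count_toMultiset]
  rw [hrhs]
  -- LHS
  simp_rw [invOfUnit_one_sub_CX]
  rw [Finset.prod_comm]
  simp_rw [prod_mk_geom x]
  rw [PowerSeries.coeff_prod]
  refine Finset.sum_congr rfl (fun c _ => ?_)
  simp only [PowerSeries.coeff_mk]
  rw [Finset.prod_mul_distrib]
end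

section
/- For finite variable sets x and y and every k ≥ 0, Σ_{λ ⊢ k} h_λ(x) m_λ(y) = Σ_{λ ⊢ k} h_λ(y) m_λ(x). -/
open MvPolynomial

namespace CauchyAux

open Finset Multiset

variable {R : Type*} [CommRing R]
variable {σ τ : Type*} [Fintype σ] [Fintype τ] [DecidableEq σ] [DecidableEq τ]

omit [Fintype σ] in
lemma multiset_split (p : Multiset (σ × τ)) :
    ∑ j : τ, p.filter (fun e => e.2 = j) = p := by
  ext e
  rw [Multiset.count_sum', Finset.sum_eq_single e.2]
  · simp [Multiset.count_filter]
  · intro j _ hj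
    rw [Multiset.count_filter, if_neg (by simpa using (Ne.symm hj))]
  · simp

omit [Fintype σ] [DecidableEq σ] in
lemma sum_count_univ {k : ℕ} (s : Sym τ k) : ∑ j : τ, Multiset.count j s.1 = k := by
  have h1 : ∑ j ∈ s.1.toFinset, Multiset.count j s.1 = Multiset.card s.1 :=
    Multiset.toFinset_sum_count_eq s.1
  have h2 : ∑ j : τ, Multiset.count j s.1 = ∑ j ∈ s.1.toFinset, Multiset.count j s.1 :=
    (Finset.sum_subset (Finset.subset_univ s.1.toFinset)
      (fun j _ hj => Multiset.count_eq_zero_of_notMem (by simpa using hj))).symm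
  rw [h2, h1, s.2]

lemma card_finset_sum {ι : Type*} (s : Finset ι) (f : ι → Multiset σ) :
    Multiset.card (∑ j ∈ s, f j) = ∑ j ∈ s, Multiset.card (f j) :=
  map_sum (⟨⟨Multiset.card, Multiset.card_zero⟩, Multiset.card_add⟩ : Multiset σ →+ ℕ) f s

lemma map_finset_sum {ι β : Type*} (s : Finset ι) (f : ι → Multiset σ) (g : σ → β) :
    Multiset.map g (∑ j ∈ s, f j) = ∑ j ∈ s, Multiset.map g (f j) :=
  map_sum (Multiset.mapAddMonoidHom g) f s

lemma filter_finset_sum {ι : Type*} (s : Finset ι) (f : ι → Multiset σ)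
    (q : σ → Prop) [DecidablePred q] :
    Multiset.filter q (∑ j ∈ s, f j) = ∑ j ∈ s, Multiset.filter q (f j) :=
  map_sum (⟨⟨Multiset.filter q, Multiset.filter_zero q⟩,
    fun a b => Multiset.filter_add q a b⟩ : Multiset σ →+ Multiset σ) f s

/-- The bijection between tuples of multisets and multisets of pairs with prescribed
second projection. -/
def fiberEquiv {k : ℕ} (s : Sym τ k) :
    ((j : τ) → Sym σ (Multiset.count j s.1)) ≃ {p : Sym (σ × τ) k // p.map Prod.snd = s} where
  toFun t := ⟨⟨∑ j : τ, (t j).1.map (fun i => (i, j)), by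
      rw [card_finset_sum]
      simp only [Multiset.card_map, (t _).2]
      exact sum_count_univ s⟩, by
    apply Sym.ext
    show Multiset.map Prod.snd (∑ j : τ, (t j).1.map (fun i => (i, j))) = s.1
    rw [map_finset_sum]
    simp only [Multiset.map_map, Function.comp_def]
    have : ∀ j : τ, Multiset.map (fun _ : σ => j) (t j).1
        = Multiset.count j s.1 • ({j} : Multiset τ) := by
      intro j
      rw [Multiset.map_const', (t j).2, ← Multiset.nsmul_singleton]
    rw [Finset.sum_congr rfl (fun j _ => this j)]
    rw [← Finset.sum_subset (Finset.subset_univ s.1.toFinset)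
      (fun j _ hj => by
        rw [Multiset.count_eq_zero_of_notMem (by simpa using hj), zero_smul])]
    exact Multiset.toFinset_sum_count_nsmul_eq s.1⟩
  invFun p := fun j => ⟨(p.1.1.filter (fun e => e.2 = j)).map Prod.fst, by
    have hps : Multiset.map Prod.snd p.1.1 = s.1 :=
      (Sym.coe_map p.1 Prod.snd).symm.trans
        (congrArg (fun q : Sym τ k => (q : Multiset τ)) p.2)
    rw [Multiset.card_map, ← Multiset.countP_eq_card_filter]
    have hc : Multiset.count j s.1 = Multiset.count j (Multiset.map Prod.snd p.1.1) := by
      rw [hps]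
    rw [hc, Multiset.count_map, Multiset.countP_eq_card_filter]
    congr 1
    apply Multiset.filter_congr
    intro e _
    simp [eq_comm]⟩
  left_inv t := by
    funext j
    apply Sym.ext
    show Multiset.map Prod.fst
      (Multiset.filter (fun e => e.2 = j) (∑ j' : τ, (t j').1.map (fun i => (i, j')))) = (t j).1
    rw [filter_finset_sum]
    have : ∀ j' : τ, Multiset.filter (fun e => e.2 = j) ((t j').1.map (fun i => (i, j')))
        = if j' = j then (t j).1.map (fun i => (i, j)) else 0 := by
      intro j'
      rw [Multiset.filter_map]
      by_cases h : j' = j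
      · subst h
        simp only [if_pos rfl]
        congr 1
        rw [Multiset.filter_eq_self]
        intro a _
        simp [Function.comp]
      · rw [if_neg h]
        rw [Multiset.filter_eq_nil.2]
        · simp
        · intro a _
          simp [Function.comp, h]
    rw [Finset.sum_congr rfl (fun j' _ => this j'), Finset.sum_ite_eq' Finset.univ j]
    simp [Multiset.map_map, Function.comp]
  right_inv p := by
    apply Subtype.ext
    apply Sym.ext
    show (∑ j : τ, Multiset.map (fun i => (i, j))
      (Multiset.map Prod.fst (Multiset.filter (fun e => e.2 = j) p.1.1))) = p.1.1
    have : ∀ j : τ, Multiset.map (fun i => (i, j))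
        (Multiset.map Prod.fst (Multiset.filter (fun e => e.2 = j) p.1.1))
        = Multiset.filter (fun e => e.2 = j) p.1.1 := by
      intro j
      rw [Multiset.map_map]
      rw [Multiset.map_congr rfl ?_, Multiset.map_id]
      intro e he
      have : e.2 = j := (Multiset.mem_filter.1 he).2
      simp [Function.comp, ← this]
    rw [Finset.sum_congr rfl (fun j _ => this j)]
    exact multiset_split p.1.1

lemma eval_hsymm (x : σ → R) (n : ℕ) :
    eval x (hsymm σ R n) = ∑ t : Sym σ n, (t.1.map x).prod := by
  rw [hsymm, map_sum]
  refine Finset.sum_congr rfl fun t _ => ?_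
  rw [map_multiset_prod, Multiset.map_map]
  simp [Function.comp]

omit [Fintype σ] [DecidableEq σ] in
lemma eval_msymm {k : ℕ} (y : τ → R) (μ : Nat.Partition k) :
    eval y (msymm τ R μ) = ∑ s : {a : Sym τ k // Nat.Partition.ofSym a = μ},
      (s.1.1.map y).prod := by
  rw [msymm, map_sum]
  refine Finset.sum_congr rfl fun t _ => ?_
  rw [map_multiset_prod, Multiset.map_map]
  simp [Function.comp]

lemma prod_finset_sum {ι β : Type*} [CommMonoid β] (s : Finset ι) (f : ι → Multiset β) :
    (∑ j ∈ s, f j).prod = ∏ j ∈ s, (f j).prod := by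
  classical
  induction s using Finset.cons_induction with
  | empty => simp
  | cons a s ha ih => rw [Finset.sum_cons, Finset.prod_cons, Multiset.prod_add, ih]

lemma eval_hsymmPart_ofSym (x : σ → R) {k : ℕ} (s : Sym τ k) :
    eval x (hsymmPart σ R (Nat.Partition.ofSym s))
      = ∏ j : τ, eval x (hsymm σ R (Multiset.count j s.1)) := by
  calc eval x (hsymmPart σ R (Nat.Partition.ofSym s))
      = (Multiset.map (fun a => eval x (hsymm σ R (Multiset.count a s.1))) s.1.dedup).prod := by
        rw [hsymmPart, map_multiset_prod, Multiset.map_map]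
        simp only [Nat.Partition.ofSym, Multiset.map_map]
        rfl
    _ = ∏ a ∈ s.1.toFinset, eval x (hsymm σ R (Multiset.count a s.1)) := by
        rw [Finset.prod_eq_multiset_prod s.1.toFinset
          (fun a => eval x (hsymm σ R (Multiset.count a s.1)))]
        rfl
    _ = ∏ j : τ, eval x (hsymm σ R (Multiset.count j s.1)) := by
        refine Finset.prod_subset (Finset.subset_univ s.1.toFinset) fun j _ hj => ?_
        rw [Multiset.count_eq_zero_of_notMem (by simpa using hj)]
        simp

lemma key (x : σ → R) (y : τ → R) (k : ℕ) :
    ∑ μ : Nat.Partition k, eval x (hsymmPart σ R μ) * eval y (msymm τ R μ)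
      = eval (fun p : σ × τ => x p.1 * y p.2) (hsymm (σ × τ) R k) := by
  have hL : ∑ μ : Nat.Partition k, eval x (hsymmPart σ R μ) * eval y (msymm τ R μ)
      = ∑ s : Sym τ k,
          eval x (hsymmPart σ R (Nat.Partition.ofSym s)) * (s.1.map y).prod := by
    rw [← Fintype.sum_fiberwise (fun s : Sym τ k => Nat.Partition.ofSym s)
      (fun s => eval x (hsymmPart σ R (Nat.Partition.ofSym s)) * (s.1.map y).prod)]
    refine Finset.sum_congr rfl fun μ _ => ?_
    rw [eval_msymm, Finset.mul_sum]
    refine Finset.sum_congr rfl fun s _ => ?_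
    rw [s.2]
  rw [hL, eval_hsymm]
  rw [← Fintype.sum_fiberwise (fun p : Sym (σ × τ) k => p.map Prod.snd)
    (fun p : Sym (σ × τ) k => (p.1.map (fun e => x e.1 * y e.2)).prod)]
  refine Finset.sum_congr rfl fun s _ => ?_
  -- fixed fiber over s
  have fiber : ∀ p : {p : Sym (σ × τ) k // p.map Prod.snd = s},
      (p.1.1.map (fun e : σ × τ => x e.1 * y e.2)).prod
        = (p.1.1.map (fun e : σ × τ => x e.1)).prod * (s.1.map y).prod := by
    intro p
    have hps : Multiset.map Prod.snd p.1.1 = s.1 :=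
      (Sym.coe_map p.1 Prod.snd).symm.trans
        (congrArg (fun q : Sym τ k => (q : Multiset τ)) p.2)
    rw [← hps, Multiset.map_map, ← Multiset.prod_map_mul]
    rfl
  rw [Finset.sum_congr rfl fun p _ => fiber p, ← Finset.sum_mul]
  congr 1
  -- now the bijection
  rw [eval_hsymmPart_ofSym]
  have expand : ∀ j : τ, eval x (hsymm σ R (Multiset.count j s.1))
      = ∑ t ∈ (Finset.univ : Finset (Sym σ (Multiset.count j s.1))), (t.1.map x).prod :=
    fun j => eval_hsymm x _
  rw [Finset.prod_congr rfl fun j _ => expand j, Finset.prod_univ_sum, Fintype.piFinset_univ]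
  rw [← Equiv.sum_comp (fiberEquiv (σ := σ) s)
    (fun p : {p : Sym (σ × τ) k // p.map Prod.snd = s} =>
      (p.1.1.map (fun e : σ × τ => x e.1)).prod)]
  refine Finset.sum_congr rfl fun t _ => ?_
  show ∏ j : τ, ((t j).1.map x).prod
    = ((∑ j : τ, (t j).1.map (fun i => (i, j))).map (fun e : σ × τ => x e.1)).prod
  rw [map_finset_sum, prod_finset_sum]
  refine Finset.prod_congr rfl fun j _ => ?_
  rw [Multiset.map_map]
  rfl

end CauchyAux

/-- Symmetry: `Σ_{λ ⊢ k} h_λ(x) m_λ(y) = Σ_{λ ⊢ k} h_λ(y) m_λ(x)`. -/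
theorem hsymm_msymm_symmetry {R : Type*} [CommRing R] (m l : ℕ)
    (x : Fin m → R) (y : Fin l → R) (k : ℕ) :
    ∑ μ : Nat.Partition k, eval x (hsymmPart (Fin m) R μ) * eval y (msymm (Fin l) R μ) =
      ∑ μ : Nat.Partition k, eval y (hsymmPart (Fin l) R μ) * eval x (msymm (Fin m) R μ) := by
  rw [CauchyAux.key x y k, CauchyAux.key y x k]
  have e := Equiv.prodComm (Fin l) (Fin m)
  rw [← rename_hsymm (Fin l × Fin m) R k (Equiv.prodComm (Fin l) (Fin m)), eval_rename]
  have hfun : ((fun p : Fin m × Fin l => x p.1 * y p.2) ∘ ⇑(Equiv.prodComm (Fin l) (Fin m)))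
      = fun p : Fin l × Fin m => y p.1 * x p.2 := by
    funext q
    exact mul_comm _ _
  rw [hfun]
end

section
/- For finite variable sets x and y and every k ≥ 0, Σ_{λ ⊢ k} e_λ(x) m_λ(y) = Σ_{λ ⊢ k} e_λ(y) m_λ(x). -/
set_option maxHeartbeats 1000000

open MvPolynomial

noncomputable section AuxSymm

variable {R : Type*} [CommRing R]

lemma aux_esymm_cons (a : R) (s : Multiset R) (k : ℕ) :
    (a ::ₘ s).esymm (k + 1) = s.esymm (k + 1) + a * s.esymm k := by
  rw [Multiset.esymm, Multiset.powersetCard_cons, Multiset.map_add, Multiset.sum_add,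
    Multiset.map_map, Multiset.esymm, Multiset.esymm]
  congr 1
  rw [show ((Multiset.prod ∘ (a ::ₘ ·)) : Multiset R → R) = fun t => a * t.prod from
    funext fun t => by simp [Multiset.prod_cons]]
  rw [← Multiset.sum_map_mul_left]

lemma aux_coeff_multiset_prod (s : Multiset R) (k : ℕ) :
    PowerSeries.coeff (R := R) k
      (s.map (fun r => (1 : PowerSeries R) + PowerSeries.C (R := R) r * PowerSeries.X)).prod
      = s.esymm k := by
  induction s using Multiset.induction generalizing k with
  | empty =>
      cases k <;> simp [Multiset.esymm, PowerSeries.coeff_one, Multiset.powersetCard_zero_right]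
  | cons a s ih =>
      rw [Multiset.map_cons, Multiset.prod_cons, add_mul, one_mul, map_add, ih]
      cases k with
      | zero =>
          simp [Multiset.esymm, mul_comm, PowerSeries.coeff_zero_eq_constantCoeff]
      | succ k =>
          rw [aux_esymm_cons, mul_assoc,
            show PowerSeries.C (R := R) a * (PowerSeries.X * _) = a • (PowerSeries.X *
              (s.map (fun r => (1 : PowerSeries R) + PowerSeries.C (R := R) r * PowerSeries.X)).prod)
              from by rw [PowerSeries.smul_eq_C_mul],
            map_smul, PowerSeries.coeff_succ_X_mul, ih, smul_eq_mul]

lemma aux_eval_esymm {σ : Type*} [Fintype σ] (a : σ → R) (n : ℕ) :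
    eval a (esymm σ R n) = (Finset.univ.val.map a).esymm n := by
  rw [esymm, map_sum, Finset.esymm_map_val]
  exact Finset.sum_congr rfl fun t _ => by rw [map_prod]; simp

lemma aux_coeff_prod_one_add {σ : Type*} [Fintype σ] (a : σ → R) (k : ℕ) :
    PowerSeries.coeff (R := R) k (∏ i : σ, (1 + PowerSeries.C (R := R) (a i) * PowerSeries.X)) =
      eval a (esymm σ R k) := by
  rw [aux_eval_esymm, ← aux_coeff_multiset_prod, Multiset.map_map,
    Finset.prod_eq_multiset_prod]
  congr 1

lemma aux_coeff_G {m : ℕ} (x : Fin m → R) (b : R) (c : ℕ) :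
    PowerSeries.coeff (R := R) c (∏ i : Fin m, (1 + PowerSeries.C (R := R) (x i * b) * PowerSeries.X)) =
      eval x (esymm (Fin m) R c) * b ^ c := by
  rw [aux_coeff_prod_one_add, aux_eval_esymm, aux_eval_esymm]
  have h := Multiset.pow_smul_esymm (S := R) b c (Finset.univ.val.map x)
  rw [Multiset.map_map] at h
  rw [show (Finset.univ.val.map fun i => x i * b)
      = Finset.univ.val.map ((b • ·) ∘ x) from Multiset.map_congr rfl
        (fun i _ => by simp [mul_comm]), ← h, smul_eq_mul, mul_comm]

lemma aux_bij {l k : ℕ} (g : Fin l → ℕ → R) :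
    ∑ a : Sym (Fin l) k, ∏ j : Fin l, g j (Multiset.count j a.1)
      = ∑ d ∈ Finset.finsuppAntidiag (Finset.univ : Finset (Fin l)) k,
          ∏ j : Fin l, g j (d j) := by
  refine Finset.sum_bij' (fun a _ => Multiset.toFinsupp a.1)
    (fun d hd => (⟨Finsupp.toMultiset d, ?_⟩ : Sym (Fin l) k)) ?_ ?_ ?_ ?_ ?_
  · rw [Finsupp.card_toMultiset]
    exact (Finset.mem_finsuppAntidiag'.mp hd).1
  · intro a _
    rw [Finset.mem_finsuppAntidiag']
    exact ⟨(Multiset.toFinsupp_sum_eq a.1).trans a.2, Finset.subset_univ _⟩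
  · intro d hd
    exact Finset.mem_univ _
  · intro a ha
    exact Subtype.ext (Multiset.toFinsupp_toMultiset a.1)
  · intro d hd
    exact Finsupp.toMultiset_toFinsupp d
  · intro a ha
    exact Finset.prod_congr rfl fun j _ => by rw [Multiset.toFinsupp_apply]

lemma aux_half {m l : ℕ} (x : Fin m → R) (y : Fin l → R) (k : ℕ) :
    ∑ μ : Nat.Partition k, eval x (esymmPart (Fin m) R μ) * eval y (msymm (Fin l) R μ) =
      PowerSeries.coeff (R := R) k (∏ j : Fin l, ∏ i : Fin m,
        (1 + PowerSeries.C (R := R) (x i * y j) * PowerSeries.X)) := by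
  rw [PowerSeries.coeff_prod]
  have h1 : ∀ μ : Nat.Partition k, eval y (msymm (Fin l) R μ)
      = ∑ s : {a : Sym (Fin l) k // Nat.Partition.ofSym a = μ}, (s.1.1.map y).prod := by
    intro μ
    rw [msymm, map_sum]
    exact Finset.sum_congr rfl fun s _ => by
      rw [map_multiset_prod, Multiset.map_map]; simp
  have h2 : ∀ a : Sym (Fin l) k,
      eval x (esymmPart (Fin m) R (Nat.Partition.ofSym a)) * (a.1.map y).prod
      = ∏ j : Fin l,
          (eval x (esymm (Fin m) R (a.1.count j)) * y j ^ (a.1.count j)) := by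
    intro a
    have e1 : eval x (esymmPart (Fin m) R (Nat.Partition.ofSym a))
        = ∏ j ∈ a.1.toFinset, eval x (esymm (Fin m) R (a.1.count j)) := by
      rw [esymmPart, map_multiset_prod,
        show (Nat.Partition.ofSym a).parts = a.1.dedup.map a.1.count from rfl,
        Multiset.map_map, Finset.prod_eq_multiset_prod, Multiset.toFinset_val]
      simp [Function.comp_def]
    have e2 : (a.1.map y).prod = ∏ j ∈ a.1.toFinset, y j ^ a.1.count j :=
      Finset.prod_multiset_map_count a.1 y
    rw [e1, e2, ← Finset.prod_mul_distrib]
    refine Finset.prod_subset (Finset.subset_univ _) fun j _ hj => ?_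
    rw [Multiset.mem_toFinset] at hj
    rw [Multiset.count_eq_zero_of_notMem hj]
    simp
  calc
    ∑ μ : Nat.Partition k, eval x (esymmPart (Fin m) R μ) * eval y (msymm (Fin l) R μ)
        = ∑ μ : Nat.Partition k, ∑ s : {a : Sym (Fin l) k // Nat.Partition.ofSym a = μ},
            eval x (esymmPart (Fin m) R (Nat.Partition.ofSym s.1)) * (s.1.1.map y).prod := by
          refine Finset.sum_congr rfl fun μ _ => ?_
          rw [h1, Finset.mul_sum]
          exact Finset.sum_congr rfl fun s _ => by rw [s.2]
    _ = ∑ p : Σ μ : Nat.Partition k, {a : Sym (Fin l) k // Nat.Partition.ofSym a = μ},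
            eval x (esymmPart (Fin m) R (Nat.Partition.ofSym p.2.1)) * (p.2.1.1.map y).prod := by
          rw [← Finset.univ_sigma_univ, Finset.sum_sigma]
    _ = ∑ a : Sym (Fin l) k,
            eval x (esymmPart (Fin m) R (Nat.Partition.ofSym a)) * (a.1.map y).prod :=
          Fintype.sum_equiv (Equiv.sigmaFiberEquiv (fun a : Sym (Fin l) k => Nat.Partition.ofSym a)) _ _ (fun p => rfl)
    _ = ∑ a : Sym (Fin l) k, ∏ j : Fin l,
            (eval x (esymm (Fin m) R (a.1.count j)) * y j ^ (a.1.count j)) :=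
          Finset.sum_congr rfl fun a _ => h2 a
    _ = ∑ d ∈ Finset.finsuppAntidiag (Finset.univ : Finset (Fin l)) k,
            ∏ j : Fin l, (eval x (esymm (Fin m) R (d j)) * y j ^ (d j)) :=
          aux_bij (fun j c => eval x (esymm (Fin m) R c) * y j ^ c)
    _ = ∑ d ∈ Finset.finsuppAntidiag (Finset.univ : Finset (Fin l)) k,
          ∏ j : Fin l, PowerSeries.coeff (R := R) (d j)
            (∏ i : Fin m, (1 + PowerSeries.C (R := R) (x i * y j) * PowerSeries.X)) :=
          Finset.sum_congr rfl fun d _ =>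
            (Finset.prod_congr rfl fun j _ => (aux_coeff_G x (y j) (d j)).symm).symm.symm

end AuxSymm

/-- Symmetry: `Σ_{λ ⊢ k} e_λ(x) m_λ(y) = Σ_{λ ⊢ k} e_λ(y) m_λ(x)`. -/
theorem esymm_msymm_symmetry {R : Type*} [CommRing R] (m l : ℕ)
    (x : Fin m → R) (y : Fin l → R) (k : ℕ) :
    ∑ μ : Nat.Partition k, eval x (esymmPart (Fin m) R μ) * eval y (msymm (Fin l) R μ) =
      ∑ μ : Nat.Partition k, eval y (esymmPart (Fin l) R μ) * eval x (msymm (Fin m) R μ) := by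
  rw [aux_half x y k, aux_half y x k]
  congr 1
  rw [Finset.prod_comm]
  exact Finset.prod_congr rfl fun i _ => Finset.prod_congr rfl fun j _ => by rw [mul_comm (x i)]
end

section
/- For finite variable sets x and y and every n ≥ 1, n · Σ_{λ ⊢ n} h_λ(x) m_λ(y) = Σ_{k=0}^{n-1} p_{n-k}(x) p_{n-k}(y) · Σ_{λ ⊢ k} h_λ(x) m_λ(y). -/
open MvPolynomial Finset

namespace NGAux

variable {R : Type*} [CommRing R] {σ : Type*} [Fintype σ] [DecidableEq σ]
  {ι : Type*} [Fintype ι] [DecidableEq ι]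

omit [Fintype σ] in
lemma count_zero_of_not_mem_toFinset {s : Multiset σ} {i : σ} (hi : i ∉ s.toFinset) :
    Multiset.count i s = 0 :=
  Multiset.count_eq_zero.mpr (fun h => hi (Multiset.mem_toFinset.mpr h))

lemma sum_count_univ (s : Multiset σ) : ∑ j : σ, Multiset.count j s = Multiset.card s := by
  rw [← Multiset.toFinset_sum_count_eq s]
  exact (Finset.sum_subset (subset_univ _) (fun i _ hi => by
    simpa [Multiset.count_eq_zero] using fun h => hi (Multiset.mem_toFinset.mpr h))).symm

lemma count_sum_replicate (c : σ → ℕ) (a : σ) :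
    Multiset.count a (∑ j : σ, Multiset.replicate (c j) j) = c a := by
  simp [Multiset.count_sum', Multiset.count_replicate]

lemma sum_replicate_count (s : Multiset σ) :
    ∑ j : σ, Multiset.replicate (Multiset.count j s) j = s := by
  ext a
  rw [count_sum_replicate]

lemma card_sum_replicate (c : σ → ℕ) :
    Multiset.card (∑ j : σ, Multiset.replicate (c j) j) = ∑ j : σ, c j := by
  rw [← sum_count_univ]
  exact Finset.sum_congr rfl fun j _ => count_sum_replicate c j

lemma sym_sum_eq_piAntidiag_sum {M : Type*} [AddCommMonoid M] (n : ℕ) (G : (σ → ℕ) → M) :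
    ∑ s : Sym σ n, G (fun j => Multiset.count j s.1) =
      ∑ c ∈ piAntidiag (univ : Finset σ) n, G c := by
  refine Finset.sum_bij (i := fun s _ => fun j => Multiset.count j s.1) ?_ ?_ ?_ ?_
  · intro s _
    rw [mem_piAntidiag]
    exact ⟨by rw [sum_count_univ s.1, s.2], fun i _ => mem_univ i⟩
  · intro s _ t _ h
    have : s.1 = t.1 := by
      conv_lhs => rw [← sum_replicate_count s.1]
      conv_rhs => rw [← sum_replicate_count t.1]
      exact Finset.sum_congr rfl fun j _ => by rw [show Multiset.count j s.1 = Multiset.count j t.1 from congrFun h j]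
    exact Subtype.ext this
  · intro c hc
    rw [mem_piAntidiag] at hc
    refine ⟨⟨∑ j : σ, Multiset.replicate (c j) j, by rw [card_sum_replicate]; exact hc.1⟩,
      mem_univ _, ?_⟩
    funext j
    exact count_sum_replicate c j
  · intro s _; rfl

lemma eval_hsymm_eq (a : σ → R) (n : ℕ) :
    eval a (hsymm σ R n) = ∑ s : Sym σ n, ∏ j : σ, a j ^ Multiset.count j s.1 := by
  rw [hsymm, map_sum]
  refine Finset.sum_congr rfl fun s _ => ?_
  rw [map_multiset_prod, Multiset.map_map]
  simp only [Function.comp, eval_X]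
  rw [Finset.prod_multiset_map_count]
  refine Finset.prod_subset (subset_univ _) (fun i _ hi => ?_)
  rw [count_zero_of_not_mem_toFinset hi, pow_zero]

lemma hsymmPart_ofSym {n : ℕ} (s : Sym σ n) :
    hsymmPart ι R (Nat.Partition.ofSym s) = ∏ j : σ, hsymm ι R (Multiset.count j s.1) := by
  rw [hsymmPart]
  have : (Nat.Partition.ofSym s).parts = s.1.dedup.map (s.1.count ·) := rfl
  rw [this, Multiset.map_map]
  have h1 : ∏ j ∈ s.1.toFinset, hsymm ι R (Multiset.count j s.1) =
      (Multiset.map ((hsymm ι R) ∘ (s.1.count ·)) s.1.dedup).prod := rfl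
  rw [← h1]
  refine Finset.prod_subset (subset_univ _) (fun i _ hi => ?_)
  rw [count_zero_of_not_mem_toFinset hi, hsymm_zero]

lemma eval_msymm_eq {n : ℕ} (y : σ → R) (μ : n.Partition) :
    eval y (msymm σ R μ) =
      ∑ s : {a : Sym σ n // Nat.Partition.ofSym a = μ}, ∏ j : σ, y j ^ Multiset.count j s.1.1 := by
  rw [msymm, map_sum]
  refine Finset.sum_congr rfl fun s _ => ?_
  rw [map_multiset_prod, Multiset.map_map]
  simp only [Function.comp, eval_X]
  rw [Finset.prod_multiset_map_count]
  refine Finset.prod_subset (subset_univ _) (fun i _ hi => ?_)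
  rw [count_zero_of_not_mem_toFinset hi, pow_zero]

lemma reindex_master {M : Type*} [AddCommMonoid M] (F : ℕ → (σ → ℕ) → M) (j : σ) (n : ℕ) :
    ∑ c ∈ piAntidiag (univ : Finset σ) n, ∑ s ∈ Icc 1 (c j), F s c =
      ∑ s ∈ Icc 1 n, ∑ c ∈ piAntidiag (univ : Finset σ) (n - s), F s (c + Pi.single j s) := by
  have hsub : ∀ (c : σ → ℕ) (s : ℕ), s ≤ c j →
      (fun i => c i - (Pi.single j s : σ → ℕ) i) + Pi.single j s = c := by
    intro c s hs
    funext i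
    by_cases h : i = j
    · subst h; simp only [Pi.add_apply, Pi.single_eq_same]; omega
    · simp [Pi.single_eq_of_ne h]
  have hadd : ∀ (c : σ → ℕ) (s : ℕ),
      (fun i => (c + (Pi.single j s : σ → ℕ)) i - (Pi.single j s : σ → ℕ) i) = c := by
    intro c s
    funext i
    by_cases h : i = j
    · subst h; simp only [Pi.add_apply, Pi.single_eq_same]; omega
    · simp [Pi.single_eq_of_ne h]
  have hsumsingle : ∀ s : ℕ, ∑ i : σ, (Pi.single j s : σ → ℕ) i = s := by
    intro s; rw [Finset.sum_pi_single' j s univ, if_pos (mem_univ j)]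
  rw [Finset.sum_sigma', Finset.sum_sigma']
  refine Finset.sum_nbij' (i := fun p => ⟨p.2, fun i => p.1 i - (Pi.single j p.2 : σ → ℕ) i⟩)
    (j := fun p => ⟨p.2 + Pi.single j p.1, p.1⟩) ?_ ?_ ?_ ?_ ?_
  · rintro ⟨c, s⟩ hp
    rw [Finset.mem_sigma, mem_piAntidiag, Finset.mem_Icc] at hp
    obtain ⟨⟨hsum, -⟩, hs1, hsc⟩ := hp
    dsimp only at hsum hs1 hsc ⊢
    have hjc : c j ≤ n := hsum ▸ Finset.single_le_sum (f := c) (fun i _ => Nat.zero_le _) (mem_univ j)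
    rw [Finset.mem_sigma, Finset.mem_Icc, mem_piAntidiag]
    dsimp only
    refine ⟨⟨hs1, le_trans hsc hjc⟩, ?_, fun i _ => mem_univ i⟩
    have h2 : ∑ i : σ, (c i - (Pi.single j s : σ → ℕ) i) + ∑ i : σ, (Pi.single j s : σ → ℕ) i
        = ∑ i : σ, c i := by
      rw [← Finset.sum_add_distrib]
      refine Finset.sum_congr rfl fun i _ => ?_
      by_cases h : i = j
      · subst h; simp only [Pi.single_eq_same]; omega
      · simp [Pi.single_eq_of_ne h]
    rw [hsumsingle s, hsum] at h2
    omega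
  · rintro ⟨s, c⟩ hp
    rw [Finset.mem_sigma, mem_piAntidiag, Finset.mem_Icc] at hp
    obtain ⟨⟨hs1, hsn⟩, hsum, -⟩ := hp
    dsimp only at hsum hs1 hsn ⊢
    rw [Finset.mem_sigma, mem_piAntidiag, Finset.mem_Icc]
    dsimp only
    refine ⟨⟨?_, fun i _ => mem_univ i⟩, hs1, ?_⟩
    · simp only [Pi.add_apply]
      rw [Finset.sum_add_distrib, hsumsingle s, hsum]
      omega
    · simp only [Pi.add_apply, Pi.single_eq_same]
      omega
  · rintro ⟨c, s⟩ hp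
    rw [Finset.mem_sigma, mem_piAntidiag, Finset.mem_Icc] at hp
    obtain ⟨-, -, hsc⟩ := hp
    dsimp only at hsc ⊢
    rw [hsub c s hsc]
  · rintro ⟨s, c⟩ hp
    dsimp only
    rw [hadd c s]
  · rintro ⟨c, s⟩ hp
    rw [Finset.mem_sigma, mem_piAntidiag, Finset.mem_Icc] at hp
    obtain ⟨-, -, hsc⟩ := hp
    dsimp only at hsc ⊢
    rw [hsub c s hsc]

lemma prod_pow_single_add (a : σ → R) (c : σ → ℕ) (j : σ) (s : ℕ) :
    ∏ i : σ, a i ^ ((c + Pi.single j s : σ → ℕ) i) = a j ^ s * ∏ i : σ, a i ^ c i := by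
  have : ∀ i : σ, a i ^ ((c + Pi.single j s : σ → ℕ) i) =
      a i ^ ((Pi.single j s : σ → ℕ) i) * a i ^ c i := by
    intro i; rw [Pi.add_apply, pow_add, mul_comm]
  rw [Finset.prod_congr rfl fun i _ => this i, Finset.prod_mul_distrib]
  congr 1
  rw [Finset.prod_eq_single j (fun i _ h => by rw [Pi.single_eq_of_ne h, pow_zero])
    (fun h => absurd (mem_univ j) h)]
  rw [Pi.single_eq_same]

lemma newton_icc (a : σ → R) (n : ℕ) :
    (n : R) * ∑ c ∈ piAntidiag (univ : Finset σ) n, ∏ i : σ, a i ^ c i =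
      ∑ s ∈ Icc 1 n, (∑ i : σ, a i ^ s) *
        ∑ c ∈ piAntidiag (univ : Finset σ) (n - s), ∏ i : σ, a i ^ c i := by
  rw [Finset.mul_sum]
  have step1 : ∀ c ∈ piAntidiag (univ : Finset σ) n,
      (n : R) * ∏ i : σ, a i ^ c i = ∑ j : σ, ∑ s ∈ Icc 1 (c j), ∏ i : σ, a i ^ c i := by
    intro c hc
    rw [mem_piAntidiag] at hc
    have : (n : R) = ∑ j : σ, (c j : R) := by rw [← Nat.cast_sum, hc.1]
    rw [this, Finset.sum_mul]
    refine Finset.sum_congr rfl fun j _ => ?_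
    rw [Finset.sum_const, Nat.card_Icc, Nat.add_sub_cancel, nsmul_eq_mul]
  rw [Finset.sum_congr rfl step1, Finset.sum_comm]
  rw [Finset.sum_congr rfl fun j _ => reindex_master (fun s c => ∏ i : σ, a i ^ c i) j n]
  rw [Finset.sum_comm]
  refine Finset.sum_congr rfl fun s _ => ?_
  rw [Finset.sum_mul]
  refine Finset.sum_congr rfl fun j _ => ?_
  rw [Finset.mul_sum]
  exact Finset.sum_congr rfl fun c _ => prod_pow_single_add a c j s

lemma eval_hsymm_pa (x : ι → R) (n : ℕ) :
    eval x (hsymm ι R n) = ∑ c ∈ piAntidiag (univ : Finset ι) n, ∏ i : ι, x i ^ c i := by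
  rw [eval_hsymm_eq]
  exact sym_sum_eq_piAntidiag_sum n (fun c => ∏ i : ι, x i ^ c i)

lemma eval_psum_eq (x : ι → R) (s : ℕ) : eval x (psum ι R s) = ∑ i : ι, x i ^ s := by
  simp [psum]

lemma newton_hsymm_eval (x : ι → R) (d : ℕ) :
    (d : R) * eval x (hsymm ι R d) =
      ∑ s ∈ Icc 1 d, eval x (psum ι R s) * eval x (hsymm ι R (d - s)) := by
  simp only [eval_hsymm_pa, eval_psum_eq]
  exact newton_icc x d

lemma cauchy (x : ι → R) (y : σ → R) (n : ℕ) :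
    ∑ μ : Nat.Partition n, eval x (hsymmPart ι R μ) * eval y (msymm σ R μ) =
      ∑ c ∈ piAntidiag (univ : Finset σ) n,
        ∏ j : σ, (y j ^ c j * eval x (hsymm ι R (c j))) := by
  have h1 : ∀ μ : Nat.Partition n, eval x (hsymmPart ι R μ) * eval y (msymm σ R μ) =
      ∑ s : {a : Sym σ n // Nat.Partition.ofSym a = μ},
        ∏ j : σ, (y j ^ Multiset.count j s.1.1 * eval x (hsymm ι R (Multiset.count j s.1.1))) := by
    intro μ
    rw [eval_msymm_eq, Finset.mul_sum]
    refine Finset.sum_congr rfl fun s _ => ?_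
    obtain ⟨t, rfl⟩ := s
    rw [hsymmPart_ofSym, map_prod, ← Finset.prod_mul_distrib]
    exact Finset.prod_congr rfl fun j _ => mul_comm _ _
  calc ∑ μ : Nat.Partition n, eval x (hsymmPart ι R μ) * eval y (msymm σ R μ)
      = ∑ μ : Nat.Partition n, ∑ s : {a : Sym σ n // Nat.Partition.ofSym a = μ},
          ∏ j : σ, (y j ^ Multiset.count j s.1.1 * eval x (hsymm ι R (Multiset.count j s.1.1))) :=
        Finset.sum_congr rfl fun μ _ => h1 μ
    _ = ∑ s : Sym σ n,
          ∏ j : σ, (y j ^ Multiset.count j s.1 * eval x (hsymm ι R (Multiset.count j s.1))) :=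
        Fintype.sum_fiberwise (fun s : Sym σ n => Nat.Partition.ofSym s)
          (fun s : Sym σ n => ∏ j : σ,
            (y j ^ Multiset.count j s.1 * eval x (hsymm ι R (Multiset.count j s.1))))
    _ = _ := sym_sum_eq_piAntidiag_sum n (fun c => ∏ j : σ, (y j ^ c j * eval x (hsymm ι R (c j))))

lemma gen_icc (x : ι → R) (y : σ → R) (n : ℕ) :
    (n : R) * ∑ c ∈ piAntidiag (univ : Finset σ) n,
        ∏ j : σ, (y j ^ c j * eval x (hsymm ι R (c j))) =
      ∑ s ∈ Icc 1 n, (eval x (psum ι R s) * ∑ j : σ, y j ^ s) *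
        ∑ c ∈ piAntidiag (univ : Finset σ) (n - s),
          ∏ j : σ, (y j ^ c j * eval x (hsymm ι R (c j))) := by
  set g : σ → ℕ → R := fun j d => y j ^ d * eval x (hsymm ι R d) with hg
  set F : σ → ℕ → (σ → ℕ) → R := fun j s c =>
    y j ^ c j * (eval x (psum ι R s) * eval x (hsymm ι R (c j - s))) *
      ∏ j' ∈ univ.erase j, g j' (c j') with hF
  have claim1 : ∀ c ∈ piAntidiag (univ : Finset σ) n,
      (n : R) * ∏ j : σ, g j (c j) = ∑ j : σ, ∑ s ∈ Icc 1 (c j), F j s c := by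
    intro c hc
    rw [mem_piAntidiag] at hc
    have hn : (n : R) = ∑ j : σ, (c j : R) := by rw [← Nat.cast_sum, hc.1]
    rw [hn, Finset.sum_mul]
    refine Finset.sum_congr rfl fun j _ => ?_
    rw [← Finset.mul_prod_erase (univ : Finset σ) (fun j' => g j' (c j')) (mem_univ j)]
    have : (c j : R) * (g j (c j) * ∏ j' ∈ univ.erase j, g j' (c j')) =
        (y j ^ c j * ((c j : R) * eval x (hsymm ι R (c j)))) * ∏ j' ∈ univ.erase j, g j' (c j') := by
      simp only [hg]; ring
    rw [this, newton_hsymm_eval x (c j), Finset.mul_sum, Finset.sum_mul]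
  have claim2 : ∀ (j : σ) (s : ℕ) (c : σ → ℕ),
      F j s (c + Pi.single j s) = (eval x (psum ι R s) * y j ^ s) * ∏ j' : σ, g j' (c j') := by
    intro j s c
    have hj : (c + Pi.single j s : σ → ℕ) j = c j + s := by
      simp [Pi.single_eq_same]
    have herase : ∀ j' ∈ univ.erase j, g j' ((c + Pi.single j s : σ → ℕ) j') = g j' (c j') := by
      intro j' hj'
      rw [Pi.add_apply, Pi.single_eq_of_ne (Finset.ne_of_mem_erase hj'), add_zero]
    rw [hF]
    simp only
    rw [hj, Finset.prod_congr rfl herase, Nat.add_sub_cancel,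
      ← Finset.mul_prod_erase (univ : Finset σ) (fun j' => g j' (c j')) (mem_univ j)]
    simp only [hg]
    ring
  rw [Finset.mul_sum, Finset.sum_congr rfl claim1, Finset.sum_comm]
  rw [Finset.sum_congr rfl fun j _ => reindex_master (F j) j n, Finset.sum_comm]
  refine Finset.sum_congr rfl fun s _ => ?_
  conv_rhs => rw [Finset.mul_sum]
  rw [Finset.sum_comm]
  refine Finset.sum_congr rfl fun c _ => ?_
  calc ∑ j : σ, F j s (c + Pi.single j s)
      = ∑ j : σ, (eval x (psum ι R s) * y j ^ s) * ∏ j' : σ, g j' (c j') :=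
        Finset.sum_congr rfl fun j _ => claim2 j s c
    _ = _ := by rw [← Finset.sum_mul, ← Finset.mul_sum]

end NGAux

/-- Generalized Newton–Girard identity (Theorem 4, first):
`n·Σ_{λ ⊢ n} h_λ(x) m_λ(y) = Σ_{k=0}^{n-1} p_{n-k}(x) p_{n-k}(y) Σ_{λ ⊢ k} h_λ(x) m_λ(y)`. -/
theorem generalized_newton_girard_hsymm {R : Type*} [CommRing R] (m l : ℕ)
    (x : Fin m → R) (y : Fin l → R) (n : ℕ) (hn : 1 ≤ n) :
    (n : R) * ∑ μ : Nat.Partition n,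
        eval x (hsymmPart (Fin m) R μ) * eval y (msymm (Fin l) R μ) =
      ∑ k ∈ range n, eval x (psum (Fin m) R (n - k)) * eval y (psum (Fin l) R (n - k)) *
        ∑ μ : Nat.Partition k, eval x (hsymmPart (Fin m) R μ) * eval y (msymm (Fin l) R μ) := by
  simp only [NGAux.cauchy x y]
  rw [NGAux.gen_icc x y n]
  refine Finset.sum_nbij' (i := fun s => n - s) (j := fun k => n - k) ?_ ?_ ?_ ?_ ?_
  · intro s hs
    simp only [Finset.mem_Icc] at hs
    simp only [Finset.mem_range]
    omega
  · intro k hk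
    simp only [Finset.mem_range] at hk
    simp only [Finset.mem_Icc]
    omega
  · intro s hs
    simp only [Finset.mem_Icc] at hs
    show n - (n - s) = s
    omega
  · intro k hk
    simp only [Finset.mem_range] at hk
    show n - (n - k) = k
    omega
  · intro s hs
    simp only [Finset.mem_Icc] at hs
    show _ = eval x (psum (Fin m) R (n - (n - s))) * eval y (psum (Fin l) R (n - (n - s))) * _
    have h1 : n - (n - s) = s := by omega
    rw [h1, NGAux.eval_psum_eq y s]
end

section
/- For finite variable sets x and y and every n ≥ 1, n · Σ_{λ ⊢ n} e_λ(x) m_λ(y) = Σ_{k=0}^{n-1} (-1)^{n-k-1} p_{n-k}(x) p_{n-k}(y) · Σ_{λ ⊢ k} e_λ(x) m_λ(y). -/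
open MvPolynomial Finset

noncomputable section NGaux
variable {R : Type*} [CommRing R] {m l : ℕ}



lemma NG.coeff_prod_one_add {α : Type*} [DecidableEq α] (s : Finset α) (v : α → R) (k : ℕ) :
    PowerSeries.coeff k (∏ i ∈ s, (1 + PowerSeries.C (v i) * PowerSeries.X)) =
      ∑ t ∈ s.powersetCard k, ∏ i ∈ t, v i := by
  induction s using Finset.induction generalizing k with
  | empty =>
    cases k with
    | zero => simp
    | succ k =>
      rw [Finset.powersetCard_eq_empty.2 (by simp)]
      simp [PowerSeries.coeff_one]
  | @insert a s ha ih =>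
    rw [Finset.prod_insert ha, add_mul, one_mul, map_add]
    cases k with
    | zero =>
      simp [ih, mul_comm (PowerSeries.C (v a)) PowerSeries.X]
    | succ k =>
      rw [mul_comm (PowerSeries.C (v a)) PowerSeries.X, mul_assoc,
        PowerSeries.coeff_succ_X_mul, PowerSeries.coeff_C_mul, ih, ih,
        powersetCard_succ_insert ha]
      rw [Finset.sum_union]
      · congr 1
        rw [Finset.sum_image]
        · rw [Finset.mul_sum]
          refine Finset.sum_congr rfl fun t ht => ?_
          rw [Finset.prod_insert fun h => ha ((Finset.mem_powersetCard.1 ht).1 h)]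
        · intro t₁ h₁ t₂ h₂ h
          have h₁' := (Finset.mem_powersetCard.1 h₁).1
          have h₂' := (Finset.mem_powersetCard.1 h₂).1
          ext b
          constructor <;> intro hb
          · have : b ∈ insert a t₂ := h ▸ Finset.mem_insert_of_mem hb
            rcases Finset.mem_insert.1 this with rfl | hh
            · exact absurd (h₁' hb) ha
            · exact hh
          · have : b ∈ insert a t₁ := h ▸ Finset.mem_insert_of_mem hb
            rcases Finset.mem_insert.1 this with rfl | hh
            · exact absurd (h₂' hb) ha
            · exact hh
      · rw [Finset.disjoint_right]
        rintro t ht h'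
        obtain ⟨u, hu, rfl⟩ := Finset.mem_image.1 ht
        exact ha ((Finset.mem_powersetCard.1 h').1 (Finset.mem_insert_self a u))

lemma NG.eval_esymm_eq_coeff {α : Type*} [Fintype α] [DecidableEq α] (v : α → R) (k : ℕ) :
    eval v (esymm α R k) = PowerSeries.coeff k (∏ i, (1 + PowerSeries.C (v i) * PowerSeries.X)) := by
  rw [NG.coeff_prod_one_add, MvPolynomial.esymm, map_sum]
  exact Finset.sum_congr rfl fun t _ => by simp [eval_prod]

lemma NG.eval_esymm_mul_pow {α : Type*} [Fintype α] [DecidableEq α] (v : α → R) (u : R) (k : ℕ) :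
    eval (fun i => v i * u) (esymm α R k) = eval v (esymm α R k) * u ^ k := by
  have h1 : ∀ w : α → R, eval w (esymm α R k) = ((univ.val.map w).esymm k) := by
    intro w
    rw [MvPolynomial.esymm, map_sum, Finset.esymm_map_val]
    exact Finset.sum_congr rfl fun t _ => by simp [eval_prod]
  rw [h1, h1, mul_comm, ← smul_eq_mul, Multiset.pow_smul_esymm]
  congr 1
  rw [Multiset.map_map]
  exact Multiset.map_congr rfl fun i _ => by simp [mul_comm]


lemma NG.prod_eq_mk (x : Fin m → R) (u : R) :
    (∏ i, (1 + PowerSeries.C (x i * u) * PowerSeries.X)) =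
      PowerSeries.mk (fun k => eval x (esymm (Fin m) R k) * u ^ k) := by
  ext k
  rw [PowerSeries.coeff_mk, ← NG.eval_esymm_mul_pow, NG.eval_esymm_eq_coeff]

lemma NG.eval_esymm_prod (x : Fin m → R) (y : Fin l → R) (k : ℕ) :
    eval (fun p : Fin l × Fin m => x p.2 * y p.1) (esymm (Fin l × Fin m) R k) =
      ∑ c ∈ finsuppAntidiag (univ : Finset (Fin l)) k,
        ∏ j, eval x (esymm (Fin m) R (c j)) * y j ^ (c j) := by
  rw [NG.eval_esymm_eq_coeff, Fintype.prod_prod_type]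
  have : ∀ j : Fin l, (∏ i : Fin m, (1 + PowerSeries.C (x i * y j) * PowerSeries.X)) =
      PowerSeries.mk (fun k => eval x (esymm (Fin m) R k) * y j ^ k) := fun j => NG.prod_eq_mk x (y j)
  simp_rw [this]
  rw [PowerSeries.coeff_prod]
  simp

lemma NG.eval_psum_prod (x : Fin m → R) (y : Fin l → R) (k : ℕ) :
    eval (fun p : Fin l × Fin m => x p.2 * y p.1) (psum (Fin l × Fin m) R k) =
      eval x (psum (Fin m) R k) * eval y (psum (Fin l) R k) := by
  simp only [psum, map_sum, eval_pow, eval_X]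
  rw [Fintype.sum_prod_type, Finset.sum_mul_sum]
  rw [Finset.sum_comm]
  exact Finset.sum_congr rfl fun j _ => Finset.sum_congr rfl fun i _ => by ring
lemma NG.eval_esymmPart_ofSym (x : Fin m → R) {k : ℕ} (a : Sym (Fin l) k) :
    eval x (esymmPart (Fin m) R (Nat.Partition.ofSym a)) =
      ∏ j : Fin l, eval x (esymm (Fin m) R (Multiset.count j a.1)) := by
  rw [esymmPart, map_multiset_prod]
  simp only [Nat.Partition.ofSym, Multiset.map_map, Function.comp_apply]
  rw [show (Multiset.map (fun j => (eval x) (esymm (Fin m) R (Multiset.count j (a.1 : Multiset (Fin l))))) (a.1 : Multiset (Fin l)).dedup).prod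
      = ∏ j ∈ (a.1 : Multiset (Fin l)).toFinset, (eval x) (esymm (Fin m) R (Multiset.count j (a.1 : Multiset (Fin l)))) from rfl]
  refine Finset.prod_subset (Finset.subset_univ _) fun j _ hj => ?_
  rw [Multiset.count_eq_zero.2 (fun h => hj (Multiset.mem_toFinset.2 h)), esymm_zero, map_one]

lemma NG.eval_msymm_summand (y : Fin l → R) {k : ℕ} (a : Sym (Fin l) k) :
    eval y ((a.1.map X).prod) = ∏ j : Fin l, y j ^ (Multiset.count j a.1) := by
  rw [map_multiset_prod]
  simp only [Multiset.map_map, Function.comp_apply, eval_X]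
  rw [Finset.prod_multiset_map_count (a.1 : Multiset (Fin l)) y]
  refine Finset.prod_subset (Finset.subset_univ _) fun j _ hj => ?_
  rw [Multiset.count_eq_zero.2 (fun h => hj (Multiset.mem_toFinset.2 h)), pow_zero]

lemma NG.partition_sum (x : Fin m → R) (y : Fin l → R) (k : ℕ) :
    (∑ μ : Nat.Partition k, eval x (esymmPart (Fin m) R μ) * eval y (msymm (Fin l) R μ)) =
      ∑ c ∈ finsuppAntidiag (univ : Finset (Fin l)) k,
        ∏ j, eval x (esymm (Fin m) R (c j)) * y j ^ (c j) := by
  classical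
  have step1 : (∑ μ : Nat.Partition k,
        eval x (esymmPart (Fin m) R μ) * eval y (msymm (Fin l) R μ)) =
      ∑ a : Sym (Fin l) k, ∏ j : Fin l,
        eval x (esymm (Fin m) R (Multiset.count j a.1)) * y j ^ (Multiset.count j a.1) := by
    have hg : ∀ a : Sym (Fin l) k,
        (∏ j : Fin l, eval x (esymm (Fin m) R (Multiset.count j a.1)) * y j ^ (Multiset.count j a.1)) =
        eval x (esymmPart (Fin m) R (Nat.Partition.ofSym a)) * eval y ((a.1.map X).prod) := by
      intro a
      rw [NG.eval_esymmPart_ofSym, NG.eval_msymm_summand, Finset.prod_mul_distrib]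
    calc (∑ μ : Nat.Partition k, eval x (esymmPart (Fin m) R μ) * eval y (msymm (Fin l) R μ))
        = ∑ μ : Nat.Partition k, ∑ s : {a : Sym (Fin l) k // Nat.Partition.ofSym a = μ},
            eval x (esymmPart (Fin m) R (Nat.Partition.ofSym s.1)) * eval y ((s.1.1.map X).prod) := by
          refine Finset.sum_congr rfl fun μ _ => ?_
          rw [msymm, map_sum, Finset.mul_sum]
          exact Finset.sum_congr rfl fun s _ => by rw [s.2]
      _ = ∑ p : Σ μ : Nat.Partition k, {a : Sym (Fin l) k // Nat.Partition.ofSym a = μ},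
            eval x (esymmPart (Fin m) R (Nat.Partition.ofSym p.2.1)) * eval y ((p.2.1.1.map X).prod) := by
          rw [← Finset.univ_sigma_univ, Finset.sum_sigma]
      _ = ∑ a : Sym (Fin l) k,
            eval x (esymmPart (Fin m) R (Nat.Partition.ofSym a)) * eval y ((a.1.map X).prod) :=
          Fintype.sum_equiv (Equiv.sigmaFiberEquiv
            (fun a : Sym (Fin l) k => Nat.Partition.ofSym a)) _ _ (fun p => rfl)
      _ = _ := (Finset.sum_congr rfl fun a _ => (hg a)).symm
  rw [step1]
  have hcard : ∀ a : Sym (Fin l) k, (univ.sum ⇑(Multiset.toFinsupp (a.1 : Multiset (Fin l)))) = k := by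
    intro a
    have h := Finsupp.sum_fintype (Multiset.toFinsupp (a.1 : Multiset (Fin l))) (fun _ n => n) (fun _ => rfl)
    calc univ.sum ⇑(Multiset.toFinsupp (a.1 : Multiset (Fin l)))
        = (Multiset.toFinsupp (a.1 : Multiset (Fin l))).sum (fun _ n => n) := h.symm
      _ = Multiset.card (a.1 : Multiset (Fin l)) := Multiset.toFinsupp_sum_eq _
      _ = k := a.2
  refine Finset.sum_bij (fun (a : Sym (Fin l) k) _ => Multiset.toFinsupp (a.1 : Multiset (Fin l)))
    (fun a _ => ?_) (fun a _ b _ hab => ?_) (fun c hc => ?_) (fun a _ => ?_)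
  · rw [Finset.mem_finsuppAntidiag]
    exact ⟨hcard a, Finset.subset_univ _⟩
  · have := Multiset.toFinsupp.injective hab
    exact Subtype.ext this
  · rw [Finset.mem_finsuppAntidiag] at hc
    have hck : Multiset.card (Finsupp.toMultiset c) = k := by
      have h := Finsupp.sum_fintype c (fun _ n => n) (fun _ => rfl)
      calc Multiset.card (Finsupp.toMultiset c) = c.sum (fun _ n => n) := Finsupp.card_toMultiset c
        _ = univ.sum ⇑c := h
        _ = k := hc.1
    refine ⟨⟨Finsupp.toMultiset c, hck⟩, Finset.mem_univ _, ?_⟩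
    simp
  · refine Finset.prod_congr rfl fun j _ => ?_
    rw [Multiset.toFinsupp_apply]

end NGaux

/-- Generalized Newton–Girard identity (Theorem 4, second):
`n·Σ_{λ ⊢ n} e_λ(x) m_λ(y) = Σ_{k=0}^{n-1} (-1)^(n-k-1) p_{n-k}(x) p_{n-k}(y) Σ_{λ ⊢ k} e_λ(x) m_λ(y)`. -/
theorem generalized_newton_girard_esymm {R : Type*} [CommRing R] (m l : ℕ)
    (x : Fin m → R) (y : Fin l → R) (n : ℕ) (hn : 1 ≤ n) :
    (n : R) * ∑ μ : Nat.Partition n,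
        eval x (esymmPart (Fin m) R μ) * eval y (msymm (Fin l) R μ) =
      ∑ k ∈ range n, (-1 : R) ^ (n - k - 1) *
        eval x (psum (Fin m) R (n - k)) * eval y (psum (Fin l) R (n - k)) *
        ∑ μ : Nat.Partition k, eval x (esymmPart (Fin m) R μ) * eval y (msymm (Fin l) R μ) := by
  classical
  set z : Fin l × Fin m → R := fun p => x p.2 * y p.1 with hz
  have hS : ∀ k : ℕ, (∑ μ : Nat.Partition k,
      eval x (esymmPart (Fin m) R μ) * eval y (msymm (Fin l) R μ)) =
      eval z (esymm (Fin l × Fin m) R k) := fun k => by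
    rw [NG.partition_sum, NG.eval_esymm_prod]
  have hN := congrArg (eval z) (MvPolynomial.mul_esymm_eq_sum (Fin l × Fin m) R n)
  simp only [map_mul, map_sum, map_pow, map_neg, map_one, map_natCast] at hN
  have hsign : ∀ k : ℕ, k < n → ((-1 : R) ^ (n + 1) * (-1) ^ k) = (-1) ^ (n - k - 1) := by
    intro k hk
    rw [← pow_add]
    have h2 : n + 1 + k = (n - k - 1) + 2 * (k + 1) := by omega
    rw [h2, pow_add, pow_mul, neg_one_sq, one_pow, mul_one]
  calc (n : R) * ∑ μ : Nat.Partition n,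
        eval x (esymmPart (Fin m) R μ) * eval y (msymm (Fin l) R μ)
      = (n : R) * eval z (esymm (Fin l × Fin m) R n) := by rw [hS]
    _ = (-1 : R) ^ (n + 1) * ∑ p ∈ (antidiagonal n).filter (fun p => p.1 < n),
          (-1 : R) ^ p.1 * eval z (esymm (Fin l × Fin m) R p.1) *
            eval z (psum (Fin l × Fin m) R p.2) := hN
    _ = ∑ p ∈ antidiagonal n, (if p.1 < n then (-1 : R) ^ (n + 1) *
          ((-1 : R) ^ p.1 * eval z (esymm (Fin l × Fin m) R p.1) *
            eval z (psum (Fin l × Fin m) R p.2)) else 0) := by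
        rw [Finset.mul_sum, Finset.sum_filter]
    _ = ∑ k ∈ range (n + 1), (if k < n then (-1 : R) ^ (n + 1) *
          ((-1 : R) ^ k * eval z (esymm (Fin l × Fin m) R k) *
            eval z (psum (Fin l × Fin m) R (n - k))) else 0) :=
        Finset.Nat.sum_antidiagonal_eq_sum_range_succ_mk _ n
    _ = ∑ k ∈ range n, (if k < n then (-1 : R) ^ (n + 1) *
          ((-1 : R) ^ k * eval z (esymm (Fin l × Fin m) R k) *
            eval z (psum (Fin l × Fin m) R (n - k))) else 0) := by
        rw [Finset.sum_range_succ, if_neg (lt_irrefl n), add_zero]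
    _ = _ := by
        refine Finset.sum_congr rfl fun k hk => ?_
        have hkn : k < n := Finset.mem_range.1 hk
        rw [if_pos hkn, ← hS k, NG.eval_psum_prod]
        rw [show (-1 : R) ^ (n + 1) * ((-1 : R) ^ k * (∑ μ : Nat.Partition k,
            eval x (esymmPart (Fin m) R μ) * eval y (msymm (Fin l) R μ)) *
            (eval x (psum (Fin m) R (n - k)) * eval y (psum (Fin l) R (n - k)))) =
          ((-1 : R) ^ (n + 1) * (-1 : R) ^ k) * eval x (psum (Fin m) R (n - k)) *
            eval y (psum (Fin l) R (n - k)) * (∑ μ : Nat.Partition k,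
            eval x (esymmPart (Fin m) R μ) * eval y (msymm (Fin l) R μ)) from by ring]
        rw [hsign k hkn]
end
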